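/- Let 𝔤 be a Lie algebra with invariant symmetric bilinear form, and define the universal Gaudin subalgebra A_𝔤 ⊆ S(𝔤[t]) as the subalgebra generated by D^k Φ_i for k ≥ 0 and Φ₁,...,Φ_r free generators of S(𝔤)^𝔤, where D(x[n]) = (n+1)x[n+1]. Then A_𝔤 is Poisson commutative with respect to both brackets {x[n],y[m]}₀ = [x,y][n+m] and {x[n],y[m]}₁ = [x,y][n+m+1]. -/

import Mathlib

open MvPolynomial
/-- The image in `S(𝔤[t])` (polynomials in variables `x_a[k]`) of `x ⊗ tᵏ`. -/
noncomputable def lin {ι L : Type*} [LieRing L] [LieAlgebra ℂ L]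
    (b : Module.Basis ι ℂ L) (x : L) (k : ℕ) : MvPolynomial (ι × ℕ) ℂ :=
  (b.repr x).sum fun a c => MvPolynomial.C c * MvPolynomial.X (a, k)

/-- The biderivation bracket on `S(𝔤[t])` with `{x[n],y[m]} = [x,y][n+m+s]`:
`s = 0` gives `{·,·}₀` and `s = 1` gives `{·,·}₁`. -/
noncomputable def br {ι L : Type*} [DecidableEq ι] [LieRing L] [LieAlgebra ℂ L]
    (b : Module.Basis ι ℂ L) (s : ℕ) (f g : MvPolynomial (ι × ℕ) ℂ) :
    MvPolynomial (ι × ℕ) ℂ :=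
  ∑ p ∈ f.vars, ∑ q ∈ g.vars,
    pderiv p f * pderiv q g * lin b ⁅b p.1, b q.1⁆ (p.2 + q.2 + s)

/-- The adjoint action of `x ∈ 𝔤` on `S(𝔤[t])` by derivations,
`x · y[n] = [x,y][n]`. -/
noncomputable def lact {ι L : Type*} [DecidableEq ι] [LieRing L] [LieAlgebra ℂ L]
    (b : Module.Basis ι ℂ L) (x : L) (f : MvPolynomial (ι × ℕ) ℂ) :
    MvPolynomial (ι × ℕ) ℂ :=
  ∑ p ∈ f.vars, pderiv p f * lin b ⁅x, b p.1⁆ p.2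

/-- The derivation `D` of `S(𝔤[t])` with `D(x[n]) = (n+1)·x[n+1]`. -/
noncomputable def Dop {ι : Type*} [DecidableEq ι]
    (f : MvPolynomial (ι × ℕ) ℂ) : MvPolynomial (ι × ℕ) ℂ :=
  ∑ p ∈ f.vars, ((p.2 + 1 : ℕ) : ℂ) • (pderiv p f * MvPolynomial.X (p.1, p.2 + 1))


set_option linter.unusedSectionVars false
set_option maxHeartbeats 1000000

section GaudinAux
open Finset

namespace Stmt7

abbrev R (ι : Type*) := MvPolynomial (ι × ℕ) ℂ

noncomputable def cur {ι : Type*} : ι × ℕ → PowerSeries (R ι) := fun p =>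
  if p.2 = 0 then PowerSeries.mk (fun j => X (p.1, j)) else PowerSeries.C (X p)

noncomputable def E {ι : Type*} (f : R ι) (k : ℕ) : R ι :=
  PowerSeries.coeff k (aeval cur f)

variable {ι : Type*}

lemma E_add (f g : R ι) (k : ℕ) : E (f + g) k = E f k + E g k := by
  simp [E, map_add]

lemma E_zero' (k : ℕ) : E (0 : R ι) k = 0 := by simp [E]

lemma E_sum {α : Type*} (s : Finset α) (f : α → R ι) (k : ℕ) :
    E (∑ a ∈ s, f a) k = ∑ a ∈ s, E (f a) k := by
  simp [E, map_sum]

lemma E_C (c : ℂ) (k : ℕ) : E (C c : R ι) k = if k = 0 then C c else 0 := by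
  simp only [E, ← MvPolynomial.algebraMap_eq, AlgHom.commutes]
  rw [MvPowerSeries.algebraMap_apply]
  show (PowerSeries.coeff k) (PowerSeries.C _) = _
  simp [PowerSeries.coeff_C, MvPolynomial.algebraMap_eq]

lemma E_one (k : ℕ) : E (1 : R ι) k = if k = 0 then 1 else 0 := by
  simpa using E_C (ι := ι) 1 k

lemma E_X0 (a : ι) (k : ℕ) : E (X (a, 0) : R ι) k = X (a, k) := by
  simp [E, cur, PowerSeries.coeff_mk]

lemma E_mul (f g : R ι) (k : ℕ) :
    E (f * g) k = ∑ u ∈ range (k + 1), E f u * E g (k - u) := by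
  simp [E, map_mul, PowerSeries.coeff_mul,
    Finset.Nat.sum_antidiagonal_eq_sum_range_succ_mk]

lemma E_X_zero (p : ι × ℕ) : E (X p : R ι) 0 = X p := by
  obtain ⟨a, n⟩ := p
  simp only [E, aeval_X, cur]
  rcases Nat.eq_zero_or_pos n with h | h
  · subst h; simp [PowerSeries.coeff_mk]
  · rw [if_neg (by omega)]
    show (PowerSeries.coeff 0) (PowerSeries.C _) = _
    simp

lemma E_zero (f : R ι) : E f 0 = f := by
  induction f using MvPolynomial.induction_on with
  | C c => simp [E_C]
  | add f g hf hg => simp [E_add, hf, hg]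
  | mul_X f p hf =>
      rw [E_mul]
      simp [E_X_zero, hf]

-- ===== extension helper and operator lemmas =====
section Ops
open Stmt7
end Ops
end Stmt7
namespace Stmt7

variable {ι L : Type*} [Fintype ι] [DecidableEq ι] [LieRing L] [LieAlgebra ℂ L]
  (b : Module.Basis ι ℂ L)

lemma sum_pderiv_extend (f : R ι) {U : Finset (ι × ℕ)} (h : f.vars ⊆ U)
    (g : ι × ℕ → R ι) :
    ∑ p ∈ f.vars, pderiv p f * g p = ∑ p ∈ U, pderiv p f * g p :=
  Finset.sum_subset h (fun p _ hp => by
    rw [pderiv_eq_zero_of_notMem_vars hp, zero_mul])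

lemma lin_eq_sum (x : L) (k : ℕ) :
    lin b x k = ∑ a : ι, C (b.repr x a) * X (a, k) :=
  Finsupp.sum_fintype _ _ (by simp)

lemma lin_neg (x : L) (k : ℕ) : lin b (-x) k = - lin b x k := by
  simp [lin_eq_sum, Finset.sum_neg_distrib]

lemma lin_skew (x y : L) (k : ℕ) : lin b ⁅x, y⁆ k = - lin b ⁅y, x⁆ k := by
  rw [← lin_neg, ← lie_skew]

-- Dop lemmas
lemma Dop_eq {f : R ι} {U : Finset (ι × ℕ)} (h : f.vars ⊆ U) :
    Dop f = ∑ p ∈ U, pderiv p f * (((p.2 + 1 : ℕ) : ℂ) • X (p.1, p.2 + 1)) := by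
  rw [Dop, ← sum_pderiv_extend f h]
  exact Finset.sum_congr rfl fun p _ => (mul_smul_comm _ _ _).symm

lemma Dop_C (c : ℂ) : Dop (C c : R ι) = 0 := by simp [Dop, vars_C]

lemma Dop_zero : Dop (0 : R ι) = 0 := by simp [Dop]

lemma Dop_X (p : ι × ℕ) : Dop (X p : R ι) = ((p.2 + 1 : ℕ) : ℂ) • X (p.1, p.2 + 1) := by
  simp [Dop, vars_X]

lemma Dop_add (f g : R ι) : Dop (f + g) = Dop f + Dop g := by
  rw [Dop_eq (U := (f + g).vars ∪ f.vars ∪ g.vars) (by intro p hp; simp [hp]),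
    Dop_eq (f := f) (U := (f + g).vars ∪ f.vars ∪ g.vars) (by intro p hp; simp [hp]),
    Dop_eq (f := g) (U := (f + g).vars ∪ f.vars ∪ g.vars) (by intro p hp; simp [hp]),
    ← Finset.sum_add_distrib]
  exact Finset.sum_congr rfl fun p _ => by rw [map_add, add_mul]

lemma Dop_sum {α : Type*} (s : Finset α) (f : α → R ι) :
    Dop (∑ a ∈ s, f a) = ∑ a ∈ s, Dop (f a) := by
  classical
  induction s using Finset.cons_induction with
  | empty => simp [Dop_zero]
  | cons a s ha ih => simp [Finset.sum_insert ha, Dop_add, ih]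

lemma Dop_mul (f g : R ι) : Dop (f * g) = f * Dop g + g * Dop f := by
  rw [Dop_eq (U := (f * g).vars ∪ f.vars ∪ g.vars) (by intro p hp; simp [hp]),
    Dop_eq (f := f) (U := (f * g).vars ∪ f.vars ∪ g.vars) (by intro p hp; simp [hp]),
    Dop_eq (f := g) (U := (f * g).vars ∪ f.vars ∪ g.vars) (by intro p hp; simp [hp]),
    Finset.mul_sum, Finset.mul_sum, ← Finset.sum_add_distrib]
  exact Finset.sum_congr rfl fun p _ => by rw [pderiv_mul]; ring

lemma Dop_smul (c : ℂ) (f : R ι) : Dop (c • f) = c • Dop f := by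
  rw [smul_eq_C_mul, smul_eq_C_mul, Dop_mul, Dop_C, mul_zero, add_zero]


lemma br_eq (s : ℕ) {f g : R ι} {U V : Finset (ι × ℕ)}
    (hU : f.vars ⊆ U) (hV : g.vars ⊆ V) :
    br b s f g = ∑ p ∈ U, ∑ q ∈ V,
      pderiv p f * pderiv q g * lin b ⁅b p.1, b q.1⁆ (p.2 + q.2 + s) := by
  rw [br, Finset.sum_subset hU (fun p _ hp => by
    simp [pderiv_eq_zero_of_notMem_vars hp])]
  exact Finset.sum_congr rfl fun p _ => Finset.sum_subset hV (fun q _ hq => by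
    simp [pderiv_eq_zero_of_notMem_vars hq])

lemma br_C_left (s : ℕ) (c : ℂ) (g : R ι) : br b s (C c) g = 0 := by
  simp [br, vars_C]

lemma br_C_right (s : ℕ) (c : ℂ) (f : R ι) : br b s f (C c) = 0 := by
  simp [br, vars_C]

lemma br_add_left (s : ℕ) (f f' g : R ι) :
    br b s (f + f') g = br b s f g + br b s f' g := by
  rw [br_eq b s (U := (f + f').vars ∪ f.vars ∪ f'.vars) (by intro p hp; simp [hp])
      (subset_refl _),
    br_eq b s (f := f) (U := (f + f').vars ∪ f.vars ∪ f'.vars) (by intro p hp; simp [hp])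
      (subset_refl _),
    br_eq b s (f := f') (U := (f + f').vars ∪ f.vars ∪ f'.vars) (by intro p hp; simp [hp])
      (subset_refl _),
    ← Finset.sum_add_distrib]
  refine Finset.sum_congr rfl fun p _ => ?_
  rw [← Finset.sum_add_distrib]
  exact Finset.sum_congr rfl fun q _ => by rw [map_add, add_mul, add_mul]

lemma br_mul_left (s : ℕ) (f f' g : R ι) :
    br b s (f * f') g = f * br b s f' g + f' * br b s f g := by
  rw [br_eq b s (U := (f * f').vars ∪ f.vars ∪ f'.vars) (by intro p hp; simp [hp])
      (subset_refl _),
    br_eq b s (f := f) (U := (f * f').vars ∪ f.vars ∪ f'.vars) (by intro p hp; simp [hp])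
      (subset_refl _),
    br_eq b s (f := f') (U := (f * f').vars ∪ f.vars ∪ f'.vars) (by intro p hp; simp [hp])
      (subset_refl _),
    Finset.mul_sum, Finset.mul_sum, ← Finset.sum_add_distrib]
  refine Finset.sum_congr rfl fun p _ => ?_
  rw [Finset.mul_sum, Finset.mul_sum, ← Finset.sum_add_distrib]
  refine Finset.sum_congr rfl fun q _ => ?_
  rw [pderiv_mul]; ring

lemma br_antisymm (s : ℕ) (f g : R ι) : br b s f g = - br b s g f := by
  rw [br, br, Finset.sum_comm, ← Finset.sum_neg_distrib]
  refine Finset.sum_congr rfl fun p _ => ?_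
  rw [← Finset.sum_neg_distrib]
  refine Finset.sum_congr rfl fun q _ => ?_
  rw [lin_skew b (b p.1) (b q.1), Nat.add_comm p.2 q.2]
  ring

lemma br_add_right (s : ℕ) (f g g' : R ι) :
    br b s f (g + g') = br b s f g + br b s f g' := by
  rw [br_antisymm, br_add_left, br_antisymm b s g f, br_antisymm b s g' f]; ring

lemma br_mul_right (s : ℕ) (f g g' : R ι) :
    br b s f (g * g') = g * br b s f g' + g' * br b s f g := by
  rw [br_antisymm, br_mul_left, br_antisymm b s g' f, br_antisymm b s g f]; ring

lemma lact_eq (x : L) {f : R ι} {U : Finset (ι × ℕ)} (h : f.vars ⊆ U) :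
    lact b x f = ∑ p ∈ U, pderiv p f * lin b ⁅x, b p.1⁆ p.2 :=
  sum_pderiv_extend f h _


def S0 (ι : Type*) : Set (ι × ℕ) := {p | p.2 = 0}

lemma supported0_induction {P : R ι → Prop}
    (hX : ∀ a : ι, P (X (a, 0)))
    (hC : ∀ c : ℂ, P (C c))
    (hadd : ∀ f g, P f → P g → P (f + g))
    (hmul : ∀ f g, P f → P g → P (f * g))
    {f : R ι} (hf : f ∈ supported ℂ (S0 ι)) : P f := by
  rw [supported_eq_adjoin_X] at hf
  refine Algebra.adjoin_induction ?_ ?_ (fun x y _ _ hx hy => hadd x y hx hy)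
    (fun x y _ _ hx hy => hmul x y hx hy) hf
  · rintro x ⟨p, hp, rfl⟩
    obtain ⟨a, n⟩ := p
    have hn : n = 0 := hp
    subst hn; exact hX a
  · intro c; simpa [MvPolynomial.algebraMap_eq] using hC c

lemma Dop_E {f : R ι} (hf : f ∈ supported ℂ (S0 ι)) (k : ℕ) :
    Dop (E f k) = ((k + 1 : ℕ) : ℂ) • E f (k + 1) := by
  revert k
  refine supported0_induction
    (P := fun f => ∀ k, Dop (E f k) = ((k + 1 : ℕ) : ℂ) • E f (k + 1)) ?_ ?_ ?_ ?_ hf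
  · intro a k; rw [E_X0, E_X0]; exact Dop_X (a, k)
  · intro c k; simp [E_C, apply_ite Dop, Dop_C, Dop_zero]
  · intro f g hf hg k; simp [E_add, Dop_add, hf, hg, smul_add]
  · intro f g hf hg k
    have hstep : ∀ u ∈ range (k+1), Dop (E f u * E g (k - u)) =
        ((u + 1 : ℕ) : ℂ) • (E f (u+1) * E g (k - u)) +
        ((k - u + 1 : ℕ) : ℂ) • (E f u * E g (k - u + 1)) := by
      intro u hu
      rw [Dop_mul, hf, hg, mul_smul_comm, mul_smul_comm,
        mul_comm (E g (k - u)) (E f (u + 1)), add_comm]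
    have e1 : ∑ u ∈ range (k+1), ((u + 1 : ℕ) : ℂ) • (E f (u+1) * E g (k - u)) =
        ∑ v ∈ range (k+2), ((v : ℕ) : ℂ) • (E f v * E g (k + 1 - v)) := by
      rw [Finset.sum_range_succ' (fun v => ((v : ℕ) : ℂ) • (E f v * E g (k + 1 - v))) (k+1)]
      simp [Nat.succ_sub_succ]
    have e2 : ∑ v ∈ range (k+2), ((k + 1 - v : ℕ) : ℂ) • (E f v * E g (k + 1 - v)) =
        ∑ u ∈ range (k+1), ((k - u + 1 : ℕ) : ℂ) • (E f u * E g (k - u + 1)) := by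
      rw [Finset.sum_range_succ]
      simp only [Nat.sub_self, Nat.cast_zero, zero_smul, add_zero]
      refine Finset.sum_congr rfl fun u hu => ?_
      have hu' : u ≤ k := by simpa [Nat.lt_succ_iff] using hu
      rw [show k + 1 - u = k - u + 1 by omega]
    calc Dop (E (f*g) k)
        = ∑ u ∈ range (k+1), Dop (E f u * E g (k - u)) := by rw [E_mul, Dop_sum]
      _ = ∑ u ∈ range (k+1), (((u + 1 : ℕ) : ℂ) • (E f (u+1) * E g (k - u)) +
            ((k - u + 1 : ℕ) : ℂ) • (E f u * E g (k - u + 1))) := Finset.sum_congr rfl hstep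
      _ = ∑ v ∈ range (k+2), (((v : ℕ) : ℂ) • (E f v * E g (k + 1 - v)) +
            ((k + 1 - v : ℕ) : ℂ) • (E f v * E g (k + 1 - v))) := by
            rw [Finset.sum_add_distrib, Finset.sum_add_distrib, e1, e2]
      _ = ∑ v ∈ range (k+2), ((k + 1 : ℕ) : ℂ) • (E f v * E g (k + 1 - v)) := by
            refine Finset.sum_congr rfl fun v hv => ?_
            have hv' : v ≤ k + 1 := by simpa [Nat.lt_succ_iff] using hv
            rw [← add_smul]
            congr 1
            rw [Nat.cast_sub hv']
            push_cast; ring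
      _ = ((k + 1 : ℕ) : ℂ) • E (f*g) (k+1) := by rw [E_mul, Finset.smul_sum]

lemma Dop_iter {f : R ι} (hf : f ∈ supported ℂ (S0 ι)) (k : ℕ) :
    Dop^[k] f = ((k.factorial : ℕ) : ℂ) • E f k := by
  induction k with
  | zero => simp [E_zero]
  | succ k ih =>
      rw [Function.iterate_succ_apply', ih, Dop_smul, Dop_E hf, smul_smul]
      congr 1
      push_cast [Nat.factorial_succ]
      ring


lemma E_supported {f : R ι} (hf : f ∈ supported ℂ (S0 ι)) (k : ℕ) :
    E f k ∈ supported ℂ {p : ι × ℕ | p.2 ≤ k} := by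
  revert k
  refine supported0_induction
    (P := fun f => ∀ k, E f k ∈ supported ℂ {p : ι × ℕ | p.2 ≤ k}) ?_ ?_ ?_ ?_ hf
  · intro a k
    rw [E_X0, mem_supported]
    intro p hp
    simp only [Finset.coe_subset, vars_X] at hp
    rcases Finset.mem_singleton.1 (by exact_mod_cast hp) with h
    subst h; simp
  · intro c k
    rw [E_C]
    split_ifs
    · exact Subalgebra.algebraMap_mem _ c
    · exact zero_mem _
  · intro f g hf hg k
    rw [E_add]; exact add_mem (hf k) (hg k)
  · intro f g hf hg k
    rw [E_mul]
    refine sum_mem fun u hu => ?_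
    have hu' : u ≤ k := by simpa [Nat.lt_succ_iff] using hu
    refine mul_mem (supported_mono ?_ (hf u)) (supported_mono ?_ (hg (k - u)))
    · intro p hp; exact le_trans hp hu'
    · intro p hp; exact le_trans hp (Nat.sub_le _ _)

lemma vars_E {f : R ι} (hf : f ∈ supported ℂ (S0 ι)) (k : ℕ) :
    (E f k).vars ⊆ Finset.univ ×ˢ range (k + 1) := by
  intro p hp
  have := (mem_supported.1 (E_supported hf k)) hp
  simp only [Set.mem_setOf_eq] at this
  simp [Finset.mem_product, Finset.mem_range, Nat.lt_succ_iff, this]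

lemma pderiv_E {f : R ι} (hf : f ∈ supported ℂ (S0 ι)) (a : ι) (n k : ℕ) :
    pderiv (a, n) (E f k) =
      if n ≤ k then E (pderiv (a, 0) f) (k - n) else 0 := by
  revert n k
  refine supported0_induction
    (P := fun f => ∀ n k, pderiv (a, n) (E f k) =
      if n ≤ k then E (pderiv (a, 0) f) (k - n) else 0) ?_ ?_ ?_ ?_ hf
  · intro c n k
    have h1 : pderiv (a, n) (X (c, k) : R ι) = if c = a ∧ k = n then 1 else 0 := by
      rw [pderiv_X, Pi.single_apply]; simp [Prod.ext_iff]
    have h2 : pderiv (a, 0) (X (c, 0) : R ι) = if c = a then 1 else 0 := by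
      rw [pderiv_X, Pi.single_apply]; simp [Prod.ext_iff]
    rw [E_X0, h1, h2]
    by_cases hc : c = a
    · subst hc
      by_cases hnk : n ≤ k
      · rw [if_pos hnk, if_pos rfl, E_one]
        by_cases hkn : k = n
        · rw [if_pos ⟨rfl, hkn⟩, if_pos (by omega)]
        · rw [if_neg (by tauto), if_neg (by omega)]
      · rw [if_neg hnk, if_neg (by intro h; exact hnk (by omega))]
    · rw [if_neg (by tauto), if_neg hc]
      split_ifs <;> simp [E_zero']
  · intro c n k
    rw [E_C]
    have : pderiv (a, 0) (C c : R ι) = 0 := pderiv_C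
    rw [this]
    split_ifs <;> simp [E_zero']
  · intro f g hf hg n k
    rw [E_add, map_add, hf, hg, map_add]
    split_ifs <;> simp [E_add, E_zero']
  · intro f g hf hg n k
    rw [E_mul, map_sum]
    have hterm : ∀ u ∈ range (k + 1),
        pderiv (a, n) (E f u * E g (k - u)) =
          (if n ≤ u then E (pderiv (a, 0) f) (u - n) else 0) * E g (k - u) +
          E f u * (if n ≤ k - u then E (pderiv (a, 0) g) (k - u - n) else 0) := by
      intro u hu
      rw [pderiv_mul, hf, hg]
    rw [Finset.sum_congr rfl hterm, Finset.sum_add_distrib]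
    by_cases h : n ≤ k
    · rw [if_pos h, pderiv_mul, E_add, E_mul, E_mul]
      congr 1
      · have hsub : Finset.Ico n (k+1) ⊆ range (k+1) := by
          intro u hu; simp only [Finset.mem_Ico] at hu; exact Finset.mem_range.2 hu.2
        rw [← Finset.sum_subset hsub (fun u hu hnu => by
          rw [if_neg (by simp only [Finset.mem_range] at hu; simp only [Finset.mem_Ico] at hnu; omega), zero_mul])]
        rw [Finset.sum_Ico_eq_sum_range, show k + 1 - n = k - n + 1 by omega]
        refine Finset.sum_congr rfl fun u hu => ?_
        rw [if_pos (by omega), show n + u - n = u by omega,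
          show k - (n + u) = k - n - u by omega]
      · rw [← Finset.sum_subset (Finset.range_subset_range.2 (by omega : k - n + 1 ≤ k + 1))
          (fun u hu hnu => by
            rw [if_neg (by simp only [Finset.mem_range] at hu hnu; omega), mul_zero])]
        refine Finset.sum_congr rfl fun u hu => ?_
        have hu' : u ≤ k - n := by simpa [Nat.lt_succ_iff] using hu
        rw [if_pos (by omega), show k - u - n = k - n - u by omega]
    · rw [if_neg h]
      have z1 : ∀ u ∈ range (k + 1),
          (if n ≤ u then E (pderiv (a, 0) f) (u - n) else 0) * E g (k - u) = 0 := by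
        intro u hu
        rw [if_neg (by simp only [Finset.mem_range] at hu; omega), zero_mul]
      have z2 : ∀ u ∈ range (k + 1),
          E f u * (if n ≤ k - u then E (pderiv (a, 0) g) (k - u - n) else 0) = 0 := by
        intro u hu
        rw [if_neg (by simp only [Finset.mem_range] at hu; omega), mul_zero]
      rw [Finset.sum_congr rfl z1, Finset.sum_congr rfl z2]
      simp


lemma E_lin (x : L) (m : ℕ) : E (lin b x 0) m = lin b x m := by
  rw [lin_eq_sum, lin_eq_sum, E_sum]
  refine Finset.sum_congr rfl fun a _ => ?_
  rw [E_mul, Finset.sum_eq_single 0 (fun u hu hne => by rw [E_C, if_neg hne, zero_mul])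
    (fun h => absurd (Finset.mem_range.2 (by omega)) h)]
  rw [E_C, if_pos rfl, E_X0, Nat.sub_zero]

lemma mem_supported0 {f : R ι} (hdegf : ∀ p ∈ f.vars, p.2 = 0) :
    f ∈ supported ℂ (S0 ι) :=
  mem_supported.2 (fun p hp => hdegf p (Finset.mem_coe.1 hp))

lemma inv_sum {f : R ι} (hdegf : ∀ p ∈ f.vars, p.2 = 0) (x : L)
    (hinvf : lact b x f = 0) (t : ℕ) :
    ∑ u ∈ range (t + 1), ∑ c : ι, E (pderiv (c, 0) f) u * lin b ⁅x, b c⁆ (t - u) = 0 := by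
  have hflat : ∑ c : ι, pderiv (c, 0) f * lin b ⁅x, b c⁆ 0 = 0 := by
    have h := hinvf
    rw [lact_eq b x (U := Finset.univ ×ˢ ({0} : Finset ℕ)) (fun p hp => by
      have h0 := hdegf p hp
      exact Finset.mem_product.2 ⟨Finset.mem_univ _, Finset.mem_singleton.2 h0⟩),
      Finset.sum_product] at h
    simpa using h
  have h2 := congrArg (fun h => E h t) hflat
  simp only [E_sum, E_zero'] at h2
  rw [Finset.sum_comm]
  calc ∑ c : ι, ∑ u ∈ range (t + 1), E (pderiv (c, 0) f) u * lin b ⁅x, b c⁆ (t - u)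
      = ∑ c : ι, E (pderiv (c, 0) f * lin b ⁅x, b c⁆ 0) t := by
        refine Finset.sum_congr rfl fun c _ => ?_
        rw [E_mul]
        exact Finset.sum_congr rfl fun u _ => by rw [E_lin]
    _ = 0 := h2

noncomputable def inn (g : R ι) (x : L) (t d : ℕ) : R ι :=
  ∑ m ∈ range (t + 1), ∑ c : ι, E (pderiv (c, 0) g) m * lin b ⁅x, b c⁆ ((t - m) + d)

lemma inn_zero {g : R ι} (hdegg : ∀ p ∈ g.vars, p.2 = 0) (x : L)
    (hinvg : lact b x g = 0) (t : ℕ) : inn b g x t 0 = 0 := by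
  simpa [inn] using inv_sum b hdegg x hinvg t

lemma inn_succ (g : R ι) (x : L) (t d : ℕ) :
    inn b g x (t + 1) d = inn b g x t (d + 1) +
      ∑ c : ι, E (pderiv (c, 0) g) (t + 1) * lin b ⁅x, b c⁆ d := by
  rw [inn, Finset.sum_range_succ, inn]
  refine congrArg₂ (· + ·) ?_ ?_
  · refine Finset.sum_congr rfl fun m hm => Finset.sum_congr rfl fun c _ => ?_
    have hm' : m ≤ t := by simpa [Nat.lt_succ_iff] using hm
    rw [show t + 1 - m + d = (t - m) + (d + 1) by omega]
  · simp

lemma inn_closed {g : R ι} (hdegg : ∀ p ∈ g.vars, p.2 = 0)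
    (hinvg : ∀ x : L, lact b x g = 0) (x : L) (d : ℕ) : ∀ t : ℕ,
    inn b g x t d = -∑ u ∈ range d, ∑ c : ι,
      E (pderiv (c, 0) g) (t + 1 + u) * lin b ⁅x, b c⁆ (d - 1 - u) := by
  induction d with
  | zero => intro t; simpa using inn_zero b hdegg x (hinvg x) t
  | succ d ih =>
      intro t
      have h1 := inn_succ b g x t d
      have h2 : inn b g x t (d + 1) = inn b g x (t + 1) d -
          ∑ c : ι, E (pderiv (c, 0) g) (t + 1) * lin b ⁅x, b c⁆ d := by
        rw [h1]; ring
      rw [h2, ih (t + 1)]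
      rw [Finset.sum_range_succ'
        (fun u => ∑ c : ι, E (pderiv (c, 0) g) (t + 1 + u) * lin b ⁅x, b c⁆ (d + 1 - 1 - u)) d]
      have e1 : ∀ u ∈ range d,
          (∑ c : ι, E (pderiv (c, 0) g) (t + 1 + (u + 1)) * lin b ⁅x, b c⁆ (d + 1 - 1 - (u + 1)))
          = ∑ c : ι, E (pderiv (c, 0) g) (t + 1 + 1 + u) * lin b ⁅x, b c⁆ (d - 1 - u) := by
        intro u _
        refine Finset.sum_congr rfl fun c _ => ?_
        rw [show t + 1 + (u + 1) = t + 1 + 1 + u by omega, show d + 1 - 1 - (u + 1) = d - 1 - u by omega]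
      rw [Finset.sum_congr rfl e1]
      have e2 : (∑ c : ι, E (pderiv (c, 0) g) (t + 1 + 0) * lin b ⁅x, b c⁆ (d + 1 - 1 - 0))
          = ∑ c : ι, E (pderiv (c, 0) g) (t + 1) * lin b ⁅x, b c⁆ d := by
        refine Finset.sum_congr rfl fun c _ => ?_
        rw [show t + 1 + 0 = t + 1 by omega, show d + 1 - 1 - 0 = d by omega]
      rw [e2]
      ring

lemma range_filter (N n M : ℕ) (h : N ≤ M) :
    Finset.filter (fun u => n + u < N) (range M) = range (N - n) := by
  ext u; simp only [Finset.mem_filter, Finset.mem_range]; omega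

lemma tri_swap {M N : ℕ} (h : N ≤ M) (H : ℕ → ℕ → R ι) :
    ∑ n ∈ range M, ∑ u ∈ range (N - n), H n u =
    ∑ u ∈ range M, ∑ n ∈ range (N - u), H n u := by
  have key : ∀ (H : ℕ → ℕ → R ι), ∑ n ∈ range M, ∑ u ∈ range (N - n), H n u
      = ∑ n ∈ range M, ∑ u ∈ range M, if n + u < N then H n u else 0 := by
    intro H
    refine Finset.sum_congr rfl fun n _ => ?_
    rw [← Finset.sum_filter, range_filter N n M h]
  rw [key, key (fun a c => H c a), Finset.sum_comm]
  refine Finset.sum_congr rfl fun u _ => Finset.sum_congr rfl fun n _ => ?_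
  rw [Nat.add_comm u n]


lemma br_E {f g : R ι} (hdf : ∀ p ∈ f.vars, p.2 = 0) (hdg : ∀ p ∈ g.vars, p.2 = 0)
    (s k l : ℕ) :
    br b s (E f k) (E g l) =
      ∑ n ∈ range (k + 1), ∑ a : ι, ∑ m ∈ range (l + 1), ∑ c : ι,
        E (pderiv (a, 0) f) n * E (pderiv (c, 0) g) m *
          lin b ⁅b a, b c⁆ ((k - n) + (l - m) + s) := by
  have hsf := mem_supported0 hdf
  have hsg := mem_supported0 hdg
  rw [br_eq b s (vars_E hsf k) (vars_E hsg l)]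
  have step1 : ∀ a : ι, ∀ n ∈ range (k + 1),
      (∑ q ∈ Finset.univ ×ˢ range (l + 1),
        pderiv (a, n) (E f k) * pderiv q (E g l) *
          lin b ⁅b (a, n).1, b q.1⁆ ((a, n).2 + q.2 + s)) =
      ∑ c : ι, ∑ m ∈ range (l + 1),
        E (pderiv (a, 0) f) (k - n) * E (pderiv (c, 0) g) (l - m) *
          lin b ⁅b a, b c⁆ (n + m + s) := by
    intro a n hn
    rw [Finset.sum_product]
    refine Finset.sum_congr rfl fun c _ => Finset.sum_congr rfl fun m hm => ?_
    rw [pderiv_E hsf, pderiv_E hsg,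
      if_pos (by simpa [Nat.lt_succ_iff] using hn),
      if_pos (by simpa [Nat.lt_succ_iff] using hm)]
  calc (∑ p ∈ Finset.univ ×ˢ range (k + 1), ∑ q ∈ Finset.univ ×ˢ range (l + 1),
        pderiv p (E f k) * pderiv q (E g l) * lin b ⁅b p.1, b q.1⁆ (p.2 + q.2 + s))
      = ∑ a : ι, ∑ n ∈ range (k + 1), ∑ c : ι, ∑ m ∈ range (l + 1),
        E (pderiv (a, 0) f) (k - n) * E (pderiv (c, 0) g) (l - m) *
          lin b ⁅b a, b c⁆ (n + m + s) := by
        rw [Finset.sum_product]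
        exact Finset.sum_congr rfl fun a _ => Finset.sum_congr rfl (step1 a)
    _ = ∑ n ∈ range (k + 1), ∑ a : ι, ∑ m ∈ range (l + 1), ∑ c : ι,
        E (pderiv (a, 0) f) (k - n) * E (pderiv (c, 0) g) (l - m) *
          lin b ⁅b a, b c⁆ (n + m + s) := by
        rw [Finset.sum_comm]
        exact Finset.sum_congr rfl fun n _ => Finset.sum_congr rfl fun a _ => Finset.sum_comm
    _ = ∑ n ∈ range (k + 1), ∑ a : ι, ∑ m ∈ range (l + 1), ∑ c : ι,
        E (pderiv (a, 0) f) n * E (pderiv (c, 0) g) m *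
          lin b ⁅b a, b c⁆ ((k - n) + (l - m) + s) := ?_
  -- reflection in n and m
  have reflm : ∀ (n : ℕ), n ∈ range (k + 1) → ∀ a : ι,
      (∑ m ∈ range (l + 1), ∑ c : ι,
        E (pderiv (a, 0) f) (k - n) * E (pderiv (c, 0) g) (l - m) *
          lin b ⁅b a, b c⁆ (n + m + s)) =
      ∑ m ∈ range (l + 1), ∑ c : ι,
        E (pderiv (a, 0) f) (k - n) * E (pderiv (c, 0) g) m *
          lin b ⁅b a, b c⁆ (n + (l - m) + s) := by
    intro n _ a
    rw [← Finset.sum_range_reflect (fun m => ∑ c : ι,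
      E (pderiv (a, 0) f) (k - n) * E (pderiv (c, 0) g) m *
        lin b ⁅b a, b c⁆ (n + (l - m) + s)) (l + 1)]
    refine Finset.sum_congr rfl fun m hm => Finset.sum_congr rfl fun c _ => ?_
    have hm' : m ≤ l := by simpa [Nat.lt_succ_iff] using hm
    rw [show l + 1 - 1 - m = l - m by omega, show l - (l - m) = m by omega]
  calc ∑ n ∈ range (k + 1), ∑ a : ι, ∑ m ∈ range (l + 1), ∑ c : ι,
        E (pderiv (a, 0) f) (k - n) * E (pderiv (c, 0) g) (l - m) *
          lin b ⁅b a, b c⁆ (n + m + s)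
      = ∑ n ∈ range (k + 1), ∑ a : ι, ∑ m ∈ range (l + 1), ∑ c : ι,
        E (pderiv (a, 0) f) (k - n) * E (pderiv (c, 0) g) m *
          lin b ⁅b a, b c⁆ (n + (l - m) + s) := by
        exact Finset.sum_congr rfl fun n hn => Finset.sum_congr rfl (fun a _ => reflm n hn a)
    _ = ∑ n ∈ range (k + 1), ∑ a : ι, ∑ m ∈ range (l + 1), ∑ c : ι,
        E (pderiv (a, 0) f) n * E (pderiv (c, 0) g) m *
          lin b ⁅b a, b c⁆ ((k - n) + (l - m) + s) := by
        rw [← Finset.sum_range_reflect (fun n => ∑ a : ι, ∑ m ∈ range (l + 1), ∑ c : ι,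
          E (pderiv (a, 0) f) n * E (pderiv (c, 0) g) m *
            lin b ⁅b a, b c⁆ ((k - n) + (l - m) + s)) (k + 1)]
        refine Finset.sum_congr rfl fun n hn => Finset.sum_congr rfl fun a _ =>
          Finset.sum_congr rfl fun m _ => Finset.sum_congr rfl fun c _ => ?_
        have hn' : n ≤ k := by simpa [Nat.lt_succ_iff] using hn
        rw [show k + 1 - 1 - n = k - n by omega, show k - (k - n) = n by omega]

lemma br_E_zero {f g : R ι} (hdf : ∀ p ∈ f.vars, p.2 = 0)
    (hinvf : ∀ x : L, lact b x f = 0)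
    (hdg : ∀ p ∈ g.vars, p.2 = 0) (hinvg : ∀ x : L, lact b x g = 0)
    {s : ℕ} (hs : s ≤ 1) (k l : ℕ) :
    br b s (E f k) (E g l) = 0 := by
  rw [br_E b hdf hdg s k l]
  have stepA : ∀ n ∈ range (k + 1), (∑ a : ι, ∑ m ∈ range (l + 1), ∑ c : ι,
      E (pderiv (a, 0) f) n * E (pderiv (c, 0) g) m *
        lin b ⁅b a, b c⁆ ((k - n) + (l - m) + s)) =
      ∑ u ∈ range ((k + s) - n), ∑ a : ι, ∑ c : ι,
        -(E (pderiv (a, 0) f) n *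
          (E (pderiv (c, 0) g) (l + 1 + u) * lin b ⁅b a, b c⁆ ((k + s) - n - 1 - u))) := by
    intro n hn
    have hn' : n ≤ k := by simpa [Nat.lt_succ_iff] using hn
    have h1 : ∀ a : ι, (∑ m ∈ range (l + 1), ∑ c : ι,
        E (pderiv (a, 0) f) n * E (pderiv (c, 0) g) m *
          lin b ⁅b a, b c⁆ ((k - n) + (l - m) + s)) =
        E (pderiv (a, 0) f) n * inn b g (b a) l ((k - n) + s) := by
      intro a
      rw [inn, Finset.mul_sum]
      refine Finset.sum_congr rfl fun m _ => ?_
      rw [Finset.mul_sum]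
      refine Finset.sum_congr rfl fun c _ => ?_
      rw [show (k - n) + (l - m) + s = (l - m) + ((k - n) + s) by omega, mul_assoc]
    rw [Finset.sum_congr rfl fun a _ => h1 a]
    have h2 : ∀ a : ι, E (pderiv (a, 0) f) n * inn b g (b a) l ((k - n) + s) =
        ∑ u ∈ range ((k + s) - n), ∑ c : ι,
          -(E (pderiv (a, 0) f) n *
            (E (pderiv (c, 0) g) (l + 1 + u) * lin b ⁅b a, b c⁆ ((k + s) - n - 1 - u))) := by
      intro a
      rw [show (k - n) + s = (k + s) - n by omega,
        inn_closed b hdg hinvg (b a) ((k + s) - n) l, mul_neg, Finset.mul_sum,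
        ← Finset.sum_neg_distrib]
      refine Finset.sum_congr rfl fun u _ => ?_
      rw [Finset.mul_sum, ← Finset.sum_neg_distrib]
    rw [Finset.sum_congr rfl fun a _ => h2 a, Finset.sum_comm]
  rw [Finset.sum_congr rfl stepA]
  have hswap := tri_swap (by omega : k + s ≤ k + 1)
    (fun n u => ∑ a : ι, ∑ c : ι,
      -(E (pderiv (a, 0) f) n *
        (E (pderiv (c, 0) g) (l + 1 + u) * lin b ⁅b a, b c⁆ ((k + s) - n - 1 - u))))
  rw [hswap]
  refine Finset.sum_eq_zero fun u hu => ?_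
  by_cases hcase : u < k + s
  · have ht : (k + s) - u = (k + s - u - 1) + 1 := by omega
    set t := k + s - u - 1 with hts
    rw [ht]
    have per : ∀ n ∈ range (t + 1), (∑ a : ι, ∑ c : ι,
        -(E (pderiv (a, 0) f) n *
          (E (pderiv (c, 0) g) (l + 1 + u) * lin b ⁅b a, b c⁆ ((k + s) - n - 1 - u)))) =
        ∑ c : ι, ∑ a : ι,
          E (pderiv (c, 0) g) (l + 1 + u) *
            (E (pderiv (a, 0) f) n * lin b ⁅b c, b a⁆ (t - n)) := by
      intro n hn
      have hn' : n ≤ t := by simpa [Nat.lt_succ_iff] using hn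
      rw [Finset.sum_comm]
      refine Finset.sum_congr rfl fun c _ => Finset.sum_congr rfl fun a _ => ?_
      rw [show (k + s) - n - 1 - u = t - n by omega, lin_skew b (b a) (b c)]
      ring
    rw [Finset.sum_congr rfl per, Finset.sum_comm]
    refine Finset.sum_eq_zero fun c _ => ?_
    have hall : ∀ n ∈ range (t + 1), (∑ a : ι,
        E (pderiv (c, 0) g) (l + 1 + u) *
          (E (pderiv (a, 0) f) n * lin b ⁅b c, b a⁆ (t - n))) =
        E (pderiv (c, 0) g) (l + 1 + u) *
          ∑ a : ι, E (pderiv (a, 0) f) n * lin b ⁅b c, b a⁆ (t - n) := by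
      intro n _
      rw [Finset.mul_sum]
    rw [Finset.sum_congr rfl hall, ← Finset.mul_sum,
      inv_sum b hdf (b c) (hinvf (b c)) t, mul_zero]
  · rw [show (k + s) - u = 0 by omega]
    simp

lemma br_iter_zero {f g : R ι} (hdf : ∀ p ∈ f.vars, p.2 = 0)
    (hinvf : ∀ x : L, lact b x f = 0)
    (hdg : ∀ p ∈ g.vars, p.2 = 0) (hinvg : ∀ x : L, lact b x g = 0)
    {s : ℕ} (hs : s ≤ 1) (k l : ℕ) :
    br b s (Dop^[k] f) (Dop^[l] g) = 0 := by
  rw [Dop_iter (mem_supported0 hdf) k, Dop_iter (mem_supported0 hdg) l,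
    smul_eq_C_mul, smul_eq_C_mul, br_mul_left, br_C_left, mul_zero, add_zero,
    br_mul_right, br_C_right, mul_zero, add_zero, br_E_zero b hdf hinvf hdg hinvg hs,
    mul_zero, mul_zero]

lemma glue {r : ℕ} (Φ : Fin r → R ι)
    (hdeg : ∀ i, ∀ p ∈ (Φ i).vars, p.2 = 0)
    (hinv : ∀ i (x : L), lact b x (Φ i) = 0)
    {s : ℕ} (hs : s ≤ 1) :
    ∀ f ∈ Algebra.adjoin ℂ
        {g : MvPolynomial (ι × ℕ) ℂ | ∃ (k : ℕ) (i : Fin r), g = Dop^[k] (Φ i)},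
      ∀ g ∈ Algebra.adjoin ℂ
        {g : MvPolynomial (ι × ℕ) ℂ | ∃ (k : ℕ) (i : Fin r), g = Dop^[k] (Φ i)},
        br b s f g = 0 := by
  intro f hf
  refine Algebra.adjoin_induction (p := fun f _ => ∀ g ∈ Algebra.adjoin ℂ
    {g : MvPolynomial (ι × ℕ) ℂ | ∃ (k : ℕ) (i : Fin r), g = Dop^[k] (Φ i)},
    br b s f g = 0) ?_ ?_ ?_ ?_ hf
  · rintro x ⟨k, i, rfl⟩ g hg
    refine Algebra.adjoin_induction (p := fun g _ => br b s (Dop^[k] (Φ i)) g = 0)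
      ?_ ?_ ?_ ?_ hg
    · rintro y ⟨l, j, rfl⟩
      exact br_iter_zero b (hdeg i) (fun x => hinv i x) (hdeg j) (fun x => hinv j x) hs k l
    · intro c
      rw [MvPolynomial.algebraMap_eq]
      exact br_C_right b s c _
    · intro x y _ _ hx hy
      rw [br_add_right, hx, hy, add_zero]
    · intro x y _ _ hx hy
      rw [br_mul_right, hx, hy, mul_zero, mul_zero, add_zero]
  · intro c g hg
    rw [MvPolynomial.algebraMap_eq]
    exact br_C_left b s c g
  · intro x y _ _ hx hy g hg
    rw [br_add_left, hx g hg, hy g hg, add_zero]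
  · intro x y _ _ hx hy g hg
    rw [br_mul_left, hx g hg, hy g hg, mul_zero, mul_zero, add_zero]

end Stmt7

end GaudinAux

open Stmt7 in
theorem statement7 {ι L : Type*} [Fintype ι] [DecidableEq ι]
    [LieRing L] [LieAlgebra ℂ L] (b : Module.Basis ι ℂ L)
    (r : ℕ) (Φ : Fin r → MvPolynomial (ι × ℕ) ℂ)
    (hdeg : ∀ i, ∀ p ∈ (Φ i).vars, p.2 = 0)
    (hinv : ∀ i (x : L), lact b x (Φ i) = 0)
    (hind : AlgebraicIndependent ℂ Φ)
    (hgen : ∀ f : MvPolynomial (ι × ℕ) ℂ, (∀ p ∈ f.vars, p.2 = 0) →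
      (∀ x : L, lact b x f = 0) → f ∈ Algebra.adjoin ℂ (Set.range Φ)) :
    ∀ f ∈ Algebra.adjoin ℂ
        {g : MvPolynomial (ι × ℕ) ℂ | ∃ (k : ℕ) (i : Fin r), g = Dop^[k] (Φ i)},
      ∀ g ∈ Algebra.adjoin ℂ
        {g : MvPolynomial (ι × ℕ) ℂ | ∃ (k : ℕ) (i : Fin r), g = Dop^[k] (Φ i)},
        br b 0 f g = 0 ∧ br b 1 f g = 0 := by
  intro f hf g hg
  exact ⟨glue b Φ hdeg hinv (by omega) f hf g hg,
    glue b Φ hdeg hinv (by omega) f hf g hg⟩
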